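/- arXiv:2411.08197 — 3 statements merged into one kernel-verified Lean document; each statement's English description precedes it below -/
import Mathlib

section
/- Let X ∈ ℝ^{M×N} and Y ∈ ℝ^{M×N} have full column rank N ≤ M, so that C_X = (1/M)XᵀX and C_Y = (1/M)YᵀY are positive definite. Set K_X = (1/M) X C_X⁻¹ Xᵀ, K_Y = (1/M) Y C_Y⁻¹ Yᵀ, C_{XY} = (1/M)XᵀY, and Φ = C_X^{-1/2} C_{XY} C_Y^{-1/2}, whose singular values ρ₁ ≥ … ≥ ρ_N are the canonical correlations between X and Y. Then Tr(K_X K_Y) = Σ_{i=1}^N ρ_i², Tr(K_X²) = Tr(K_Y²) = N, and consequently Tr(K_X K_Y)/√(Tr(K_X²) Tr(K_Y²)) = (1/N) Σ_{i=1}^N ρ_i². -/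
open Matrix

namespace Matrix

open scoped ComplexOrder

theorem isHermitian_transpose_mul_self {m n α : Type*} [Fintype m] [NonUnitalCommSemiring α]
    [StarRing α] [TrivialStar α] (A : Matrix m n α) : (Aᵀ * A).IsHermitian := by
  rw [IsHermitian, conjTranspose_eq_transpose_of_trivial, transpose_mul, transpose_transpose]

/-- The positive semidefinite square root of a positive semidefinite matrix
(the definition of `Matrix.PosSemidef.sqrt` in Mathlib of December 2024). -/
noncomputable def PosSemidef.sqrt {n 𝕜 : Type*} [Fintype n] [DecidableEq n] [RCLike 𝕜]
    {A : Matrix n n 𝕜} (hA : A.PosSemidef) : Matrix n n 𝕜 :=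
  hA.1.eigenvectorUnitary.1 * diagonal ((↑) ∘ (√·) ∘ hA.1.eigenvalues) *
  (star hA.1.eigenvectorUnitary : Matrix n n 𝕜)

end Matrix

lemma Matrix.PosSemidef.sqrt_isHermitian' {n : Type*} [Fintype n] [DecidableEq n]
    {A : Matrix n n ℝ} (hA : A.PosSemidef) : (hA.sqrt).IsHermitian := by
  unfold Matrix.PosSemidef.sqrt
  simp [Matrix.IsHermitian, Matrix.conjTranspose_mul, Matrix.mul_assoc, Matrix.star_eq_conjTranspose,
    Matrix.conjTranspose_eq_transpose_of_trivial]

lemma Matrix.PosSemidef.sqrt_mul_self {n : Type*} [Fintype n] [DecidableEq n]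
    {A : Matrix n n ℝ} (hA : A.PosSemidef) : hA.sqrt * hA.sqrt = A := by
  unfold Matrix.PosSemidef.sqrt
  have hU : (star hA.1.eigenvectorUnitary : Matrix n n ℝ) * hA.1.eigenvectorUnitary.1 = 1 :=
    Unitary.star_mul_self_of_mem hA.1.eigenvectorUnitary.2
  conv_rhs => rw [hA.1.spectral_theorem, Unitary.conjStarAlgAut_apply]
  simp only [Matrix.mul_assoc]
  rw [← Matrix.mul_assoc (star _) _ _, hU, Matrix.one_mul,
    ← Matrix.mul_assoc (diagonal _) (diagonal _), Matrix.diagonal_mul_diagonal]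
  congr 3
  funext i
  simp [Real.mul_self_sqrt (hA.eigenvalues_nonneg i)]

lemma trace_eq_sum_eigenvalues' {n : Type*} [Fintype n] [DecidableEq n]
    {A : Matrix n n ℝ} (hA : A.IsHermitian) :
    A.trace = ∑ i, hA.eigenvalues i := by
  simpa using hA.trace_eq_sum_eigenvalues

/-- For full-column-rank `X, Y ∈ ℝ^{M×N}` (`N ≤ M`), so that
`C_X = (1/M)XᵀX` and `C_Y = (1/M)YᵀY` are positive definite, with
`K_X = (1/M) X C_X⁻¹ Xᵀ`, `K_Y = (1/M) Y C_Y⁻¹ Yᵀ`, `C_{XY} = (1/M) Xᵀ Y` and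
`Φ = C_X^{-1/2} C_{XY} C_Y^{-1/2}` whose singular values `ρ_i` are the canonical correlations:
`Tr(K_X K_Y) = Σ ρ_i²`, `Tr(K_X²) = Tr(K_Y²) = N`, and hence the normalized similarity equals
the mean squared canonical correlation `(1/N) Σ ρ_i²`. -/
theorem cca_mean_squared_canonical_correlations
    {M N : ℕ} (hMN : N ≤ M)
    (X Y : Matrix (Fin M) (Fin N) ℝ)
    (hrX : X.rank = N) (hrY : Y.rank = N)
    (CX CY : Matrix (Fin N) (Fin N) ℝ)
    (hCX : CX = (1 / M : ℝ) • (Xᵀ * X)) (hCY : CY = (1 / M : ℝ) • (Yᵀ * Y))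
    (hCXpd : CX.PosDef) (hCYpd : CY.PosDef)
    (KX KY : Matrix (Fin M) (Fin M) ℝ)
    (hKX : KX = (1 / M : ℝ) • (X * CX⁻¹ * Xᵀ))
    (hKY : KY = (1 / M : ℝ) • (Y * CY⁻¹ * Yᵀ))
    (CXY : Matrix (Fin N) (Fin N) ℝ) (hCXY : CXY = (1 / M : ℝ) • (Xᵀ * Y))
    (Φ : Matrix (Fin N) (Fin N) ℝ)
    (hΦ : Φ = (hCXpd.posSemidef.sqrt)⁻¹ * CXY * (hCYpd.posSemidef.sqrt)⁻¹)
    (ρ : Fin N → ℝ) (hρ0 : ∀ i, 0 ≤ ρ i)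
    (hρ : ∀ i, ρ i ^ 2 = (Matrix.isHermitian_transpose_mul_self Φ).eigenvalues i) :
    (KX * KY).trace = ∑ i, ρ i ^ 2 ∧
    (KX * KX).trace = (N : ℝ) ∧
    (KY * KY).trace = (N : ℝ) ∧
    (KX * KY).trace / Real.sqrt ((KX * KX).trace * (KY * KY).trace)
      = (1 / N : ℝ) * ∑ i, ρ i ^ 2 := by
  rcases Nat.eq_zero_or_pos N with rfl | hN
  · have hX0 : X * CX⁻¹ * Xᵀ = 0 := by ext i j; simp [Matrix.mul_apply]
    have hY0 : Y * CY⁻¹ * Yᵀ = 0 := by ext i j; simp [Matrix.mul_apply]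
    rw [hKX, hKY, hX0, hY0]
    simp
  · have hM : 0 < M := lt_of_lt_of_le hN hMN
    have hm : (M : ℝ) ≠ 0 := Nat.cast_ne_zero.mpr hM.ne'
    have hdX : IsUnit CX.det := isUnit_iff_ne_zero.mpr hCXpd.det_pos.ne'
    have hdY : IsUnit CY.det := isUnit_iff_ne_zero.mpr hCYpd.det_pos.ne'
    have hiX : CX⁻¹ * CX = 1 := Matrix.nonsing_inv_mul CX hdX
    have hiY : CY⁻¹ * CY = 1 := Matrix.nonsing_inv_mul CY hdY
    have hXi : CX * CX⁻¹ = 1 := Matrix.mul_nonsing_inv CX hdX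
    have hYi : CY * CY⁻¹ = 1 := Matrix.mul_nonsing_inv CY hdY
    have hXX : Xᵀ * X = (M : ℝ) • CX := by
      rw [hCX, smul_smul, mul_one_div, div_self hm, one_smul]
    have hYY : Yᵀ * Y = (M : ℝ) • CY := by
      rw [hCY, smul_smul, mul_one_div, div_self hm, one_smul]
    have hXY : Xᵀ * Y = (M : ℝ) • CXY := by
      rw [hCXY, smul_smul, mul_one_div, div_self hm, one_smul]
    have hYX : Yᵀ * X = (M : ℝ) • CXYᵀ := by
      have e : Yᵀ * X = (Xᵀ * Y)ᵀ := by rw [Matrix.transpose_mul, Matrix.transpose_transpose]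
      rw [e, hXY, Matrix.transpose_smul]
    have hPX : (X * CX⁻¹ * Xᵀ) * (X * CX⁻¹ * Xᵀ) = (M : ℝ) • (X * CX⁻¹ * Xᵀ) := by
      have e : (X * CX⁻¹ * Xᵀ) * (X * CX⁻¹ * Xᵀ) = X * (CX⁻¹ * ((Xᵀ * X) * (CX⁻¹ * Xᵀ))) := by
        simp only [Matrix.mul_assoc]
      rw [e, hXX, Matrix.smul_mul, Matrix.mul_smul, Matrix.mul_smul]
      congr 1
      rw [show CX⁻¹ * (CX * (CX⁻¹ * Xᵀ)) = (CX⁻¹ * CX) * (CX⁻¹ * Xᵀ) from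
        (Matrix.mul_assoc _ _ _).symm, hiX, Matrix.one_mul, Matrix.mul_assoc]
    have hPY : (Y * CY⁻¹ * Yᵀ) * (Y * CY⁻¹ * Yᵀ) = (M : ℝ) • (Y * CY⁻¹ * Yᵀ) := by
      have e : (Y * CY⁻¹ * Yᵀ) * (Y * CY⁻¹ * Yᵀ) = Y * (CY⁻¹ * ((Yᵀ * Y) * (CY⁻¹ * Yᵀ))) := by
        simp only [Matrix.mul_assoc]
      rw [e, hYY, Matrix.smul_mul, Matrix.mul_smul, Matrix.mul_smul]
      congr 1
      rw [show CY⁻¹ * (CY * (CY⁻¹ * Yᵀ)) = (CY⁻¹ * CY) * (CY⁻¹ * Yᵀ) from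
        (Matrix.mul_assoc _ _ _).symm, hiY, Matrix.one_mul, Matrix.mul_assoc]
    have htrX1 : (X * CX⁻¹ * Xᵀ).trace = (M : ℝ) * N := by
      rw [Matrix.trace_mul_cycle, Matrix.mul_assoc, ← Matrix.mul_assoc, hXX,
        Matrix.smul_mul, hXi, Matrix.trace_smul, Matrix.trace_one, smul_eq_mul]
      simp
    have htrY1 : (Y * CY⁻¹ * Yᵀ).trace = (M : ℝ) * N := by
      rw [Matrix.trace_mul_cycle, Matrix.mul_assoc, ← Matrix.mul_assoc, hYY,
        Matrix.smul_mul, hYi, Matrix.trace_smul, Matrix.trace_one, smul_eq_mul]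
      simp
    have h2 : (KX * KX).trace = (N : ℝ) := by
      rw [hKX, Matrix.smul_mul, Matrix.mul_smul, hPX, smul_smul, smul_smul,
        Matrix.trace_smul, htrX1, smul_eq_mul]
      field_simp
    have h3 : (KY * KY).trace = (N : ℝ) := by
      rw [hKY, Matrix.smul_mul, Matrix.mul_smul, hPY, smul_smul, smul_smul,
        Matrix.trace_smul, htrY1, smul_eq_mul]
      field_simp
    set S := hCXpd.posSemidef.sqrt with hSdef
    set T := hCYpd.posSemidef.sqrt with hTdef
    have hS : Sᵀ = S := by
      rw [← Matrix.conjTranspose_eq_transpose_of_trivial]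
      exact hCXpd.posSemidef.sqrt_isHermitian'
    have hT : Tᵀ = T := by
      rw [← Matrix.conjTranspose_eq_transpose_of_trivial]
      exact hCYpd.posSemidef.sqrt_isHermitian'
    have hSS : S⁻¹ * S⁻¹ = CX⁻¹ := by
      rw [← Matrix.mul_inv_rev, hCXpd.posSemidef.sqrt_mul_self]
    have hTT : T⁻¹ * T⁻¹ = CY⁻¹ := by
      rw [← Matrix.mul_inv_rev, hCYpd.posSemidef.sqrt_mul_self]
    have hΦt : Φᵀ = T⁻¹ * (CXYᵀ * S⁻¹) := by
      rw [hΦ]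
      simp only [Matrix.transpose_mul, Matrix.transpose_nonsing_inv, hS, hT, Matrix.mul_assoc]
    have h1 : (KX * KY).trace = ∑ i, ρ i ^ 2 := by
      have hL : (KX * KY).trace = (CX⁻¹ * (CXY * (CY⁻¹ * CXYᵀ))).trace := by
        rw [hKX, hKY, Matrix.smul_mul, Matrix.mul_smul, smul_smul]
        have e : (X * CX⁻¹ * Xᵀ) * (Y * CY⁻¹ * Yᵀ)
            = X * (CX⁻¹ * ((Xᵀ * Y) * (CY⁻¹ * Yᵀ))) := by
          simp only [Matrix.mul_assoc]
        rw [e, hXY, Matrix.smul_mul, Matrix.mul_smul, Matrix.mul_smul, smul_smul,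
          Matrix.trace_smul, Matrix.trace_mul_comm, smul_eq_mul]
        have e2 : (CX⁻¹ * (CXY * (CY⁻¹ * Yᵀ))) * X = CX⁻¹ * (CXY * (CY⁻¹ * (Yᵀ * X))) := by
          simp only [Matrix.mul_assoc]
        rw [e2, hYX, Matrix.mul_smul, Matrix.mul_smul, Matrix.mul_smul,
          Matrix.trace_smul, smul_eq_mul]
        set t := (CX⁻¹ * (CXY * (CY⁻¹ * CXYᵀ))).trace
        field_simp
      have hR : ∑ i, ρ i ^ 2 = (CX⁻¹ * (CXY * (CY⁻¹ * CXYᵀ))).trace := by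
        have hs : ∑ i, ρ i ^ 2
            = ∑ i, (Matrix.isHermitian_transpose_mul_self Φ).eigenvalues i :=
          Finset.sum_congr rfl fun i _ => hρ i
        rw [hs, ← trace_eq_sum_eigenvalues' (Matrix.isHermitian_transpose_mul_self Φ)]
        rw [hΦt, hΦ]
        have e2 : T⁻¹ * (CXYᵀ * S⁻¹) * (S⁻¹ * CXY * T⁻¹)
            = T⁻¹ * ((CXYᵀ * (S⁻¹ * S⁻¹)) * (CXY * T⁻¹)) := by
          simp only [Matrix.mul_assoc]
        rw [e2, hSS, Matrix.trace_mul_comm]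
        have e3 : (CXYᵀ * CX⁻¹) * (CXY * T⁻¹) * T⁻¹
            = CXYᵀ * (CX⁻¹ * (CXY * (T⁻¹ * T⁻¹))) := by
          simp only [Matrix.mul_assoc]
        rw [e3, hTT, Matrix.trace_mul_comm]
        simp only [Matrix.mul_assoc]
      rw [hL, hR]
    refine ⟨h1, h2, h3, ?_⟩
    rw [h1, h2, h3, Real.sqrt_mul_self (Nat.cast_nonneg N), one_div, inv_mul_eq_div]
end

section
/- Let X ∈ ℝ^{M×N_X} and Y ∈ ℝ^{M×N_Y} be nonzero, set C_X = (1/M)XᵀX, C_Y = (1/M)YᵀY, K_X = (1/M) X ((Tr[C_X²]/Tr[C_X]) · I)⁻¹ Xᵀ and K_Y = (1/M) Y ((Tr[C_Y²]/Tr[C_Y]) · I)⁻¹ Yᵀ. Then Tr(K_X K_Y) = Tr[XXᵀ] Tr[YYᵀ] Tr[XXᵀ YYᵀ] / (Tr[(XXᵀ)²] Tr[(YYᵀ)²]), the Effective Number of Shared Dimensions ENSD(X, Y); in particular Tr(K_X²) = (Tr[XXᵀ])²/Tr[(XXᵀ)²] = R(C_X), the participation ratio of C_X. -/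
open Matrix

lemma trace_transpose_mul_self_pos {m n : ℕ} (A : Matrix (Fin m) (Fin n) ℝ)
    (hA : A ≠ 0) : 0 < (Aᵀ * A).trace := by
  have h : (Aᵀ * A).trace = ∑ j, ∑ i, A i j ^ 2 := by
    simp [Matrix.trace, Matrix.mul_apply, Matrix.diag, sq]
  obtain ⟨i, j, hij⟩ : ∃ i j, A i j ≠ 0 := by
    by_contra h
    push_neg at h
    exact hA (by ext i j; simpa using h i j)
  rw [h]
  have : 0 < ∑ i, A i j ^ 2 :=
    Finset.sum_pos' (fun k _ => sq_nonneg _) ⟨i, Finset.mem_univ i, by positivity⟩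
  exact Finset.sum_pos' (fun k _ => Finset.sum_nonneg fun l _ => sq_nonneg _)
    ⟨j, Finset.mem_univ j, this⟩

lemma trace_sq_pos {m n : ℕ} (A : Matrix (Fin m) (Fin n) ℝ)
    (hA : A ≠ 0) : 0 < (Aᵀ * A * (Aᵀ * A)).trace := by
  have hA2 : Aᵀ * A ≠ 0 := by
    intro h
    have := trace_transpose_mul_self_pos A hA
    rw [h] at this; simp at this
  have := trace_transpose_mul_self_pos (Aᵀ * A) hA2
  simpa [Matrix.transpose_mul, Matrix.transpose_transpose] using this

lemma kernel_eq {m n : ℕ} (A : Matrix (Fin m) (Fin n) ℝ) (hA : A ≠ 0) (hm : (m : ℝ) ≠ 0)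
    (C : Matrix (Fin n) (Fin n) ℝ) (hC : C = (1 / m : ℝ) • (Aᵀ * A))
    (K : Matrix (Fin m) (Fin m) ℝ)
    (hK : K = (1 / m : ℝ) •
      (A * (((C * C).trace / C.trace) • (1 : Matrix (Fin n) (Fin n) ℝ))⁻¹ * Aᵀ)) :
    K = ((Aᵀ * A).trace / (Aᵀ * A * (Aᵀ * A)).trace) • (A * Aᵀ) := by
  have ha : 0 < (Aᵀ * A).trace := trace_transpose_mul_self_pos A hA
  have hb : 0 < (Aᵀ * A * (Aᵀ * A)).trace := trace_sq_pos A hA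
  have htrC : C.trace = (1 / m) * (Aᵀ * A).trace := by
    rw [hC]; simp [Matrix.trace_smul, smul_eq_mul]
  have htrC2 : (C * C).trace = (1 / m)^2 * (Aᵀ * A * (Aᵀ * A)).trace := by
    rw [hC]
    simp [Matrix.smul_mul, Matrix.mul_smul, Matrix.trace_smul, smul_eq_mul]
    ring
  have hc : (C * C).trace / C.trace
      = (Aᵀ * A * (Aᵀ * A)).trace / (m * (Aᵀ * A).trace) := by
    rw [htrC, htrC2]; field_simp
  have hcne : (C * C).trace / C.trace ≠ 0 := by
    rw [hc]; exact div_ne_zero hb.ne' (mul_ne_zero hm ha.ne')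
  have hinv : (((C * C).trace / C.trace) • (1 : Matrix (Fin n) (Fin n) ℝ))⁻¹
      = ((C * C).trace / C.trace)⁻¹ • (1 : Matrix (Fin n) (Fin n) ℝ) := by
    apply Matrix.inv_eq_right_inv
    simp only [Matrix.smul_mul, Matrix.mul_smul, smul_smul, Matrix.one_mul,
      mul_inv_cancel₀ hcne, inv_mul_cancel₀ hcne, one_smul]
  rw [hK, hinv, hc]
  rw [Matrix.mul_smul, Matrix.mul_one, Matrix.smul_mul, smul_smul]
  congr 1
  field_simp

/-- For nonzero `X ∈ ℝ^{M×N_X}`, `Y ∈ ℝ^{M×N_Y}` with empirical covariances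
`C_X = (1/M)XᵀX`, `C_Y = (1/M)YᵀY`, and kernels built from the weight penalty
`G(X) = (Tr[C_X²]/Tr[C_X])·I`, one has
`Tr(K_X K_Y) = Tr[XXᵀ]Tr[YYᵀ]Tr[XXᵀYYᵀ]/(Tr[(XXᵀ)²]Tr[(YYᵀ)²]) = ENSD(X,Y)`;
in particular `Tr(K_X²) = (Tr[XXᵀ])²/Tr[(XXᵀ)²] = R(C_X)`, the participation ratio of `C_X`. -/
theorem trace_kernel_product_eq_ENSD
    {M NX NY : ℕ}
    (X : Matrix (Fin M) (Fin NX) ℝ) (Y : Matrix (Fin M) (Fin NY) ℝ)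
    (hX : X ≠ 0) (hY : Y ≠ 0)
    (CX : Matrix (Fin NX) (Fin NX) ℝ) (hCX : CX = (1 / M : ℝ) • (Xᵀ * X))
    (CY : Matrix (Fin NY) (Fin NY) ℝ) (hCY : CY = (1 / M : ℝ) • (Yᵀ * Y))
    (KX KY : Matrix (Fin M) (Fin M) ℝ)
    (hKX : KX = (1 / M : ℝ) •
      (X * (((CX * CX).trace / CX.trace) • (1 : Matrix (Fin NX) (Fin NX) ℝ))⁻¹ * Xᵀ))
    (hKY : KY = (1 / M : ℝ) •
      (Y * (((CY * CY).trace / CY.trace) • (1 : Matrix (Fin NY) (Fin NY) ℝ))⁻¹ * Yᵀ)) :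
    (KX * KY).trace =
      (X * Xᵀ).trace * (Y * Yᵀ).trace * (X * Xᵀ * (Y * Yᵀ)).trace /
        ((X * Xᵀ * (X * Xᵀ)).trace * (Y * Yᵀ * (Y * Yᵀ)).trace) ∧
    (KX * KX).trace = (X * Xᵀ).trace ^ 2 / (X * Xᵀ * (X * Xᵀ)).trace ∧
    (KX * KX).trace = CX.trace ^ 2 / (CX * CX).trace := by
  have hM0 : M ≠ 0 := by
    rintro rfl
    exact hX (by ext i j; exact i.elim0)
  have hM : (M : ℝ) ≠ 0 := Nat.cast_ne_zero.mpr hM0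
  have haX : 0 < (Xᵀ * X).trace := trace_transpose_mul_self_pos X hX
  have hbX : 0 < (Xᵀ * X * (Xᵀ * X)).trace := trace_sq_pos X hX
  have haY : 0 < (Yᵀ * Y).trace := trace_transpose_mul_self_pos Y hY
  have hbY : 0 < (Yᵀ * Y * (Yᵀ * Y)).trace := trace_sq_pos Y hY
  have hKX' := kernel_eq X hX hM CX hCX KX hKX
  have hKY' := kernel_eq Y hY hM CY hCY KY hKY
  -- cyclic trace identities
  have hc1X : (X * Xᵀ).trace = (Xᵀ * X).trace := Matrix.trace_mul_comm X Xᵀ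
  have hc1Y : (Y * Yᵀ).trace = (Yᵀ * Y).trace := Matrix.trace_mul_comm Y Yᵀ
  have hc2X : (X * Xᵀ * (X * Xᵀ)).trace = (Xᵀ * X * (Xᵀ * X)).trace := by
    rw [Matrix.mul_assoc, Matrix.trace_mul_comm]
    simp only [Matrix.mul_assoc]
  have hc2Y : (Y * Yᵀ * (Y * Yᵀ)).trace = (Yᵀ * Y * (Yᵀ * Y)).trace := by
    rw [Matrix.mul_assoc, Matrix.trace_mul_comm]
    simp only [Matrix.mul_assoc]
  set aX := (Xᵀ * X).trace
  set bX := (Xᵀ * X * (Xᵀ * X)).trace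
  set aY := (Yᵀ * Y).trace
  set bY := (Yᵀ * Y * (Yᵀ * Y)).trace
  have htrXY : (KX * KY).trace = (aX / bX) * (aY / bY) * (X * Xᵀ * (Y * Yᵀ)).trace := by
    rw [hKX', hKY']
    rw [Matrix.smul_mul, Matrix.mul_smul, Matrix.trace_smul, Matrix.trace_smul]
    simp [smul_eq_mul]; ring
  have htrXX : (KX * KX).trace = (aX / bX) * (aX / bX) * bX := by
    rw [hKX']
    rw [Matrix.smul_mul, Matrix.mul_smul, Matrix.trace_smul, Matrix.trace_smul]
    rw [hc2X]
    simp [smul_eq_mul]; ring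
  have htrCX : CX.trace = (1 / M) * aX := by
    rw [hCX]; simp [Matrix.trace_smul, smul_eq_mul]
    exact Or.inl rfl
  have htrCX2 : (CX * CX).trace = (1 / M)^2 * bX := by
    rw [hCX]
    simp [Matrix.smul_mul, Matrix.mul_smul, Matrix.trace_smul, smul_eq_mul]
    ring
  refine ⟨?_, ?_, ?_⟩
  · rw [htrXY, hc1X, hc1Y, hc2X, hc2Y]
    field_simp
  · rw [htrXX, hc1X, hc2X]
    field_simp
  · rw [htrXX, htrCX, htrCX2]
    field_simp
end

section
/- Let K_X and K_Y be real symmetric positive semidefinite M×M matrices with Tr K_X = Tr K_Y and K_X ≠ K_Y. Then the participation ratio of their difference satisfies R(K_X − K_Y) ≥ 2, where R(A) = ‖A‖_*² / ‖A‖_F² with ‖A‖_* the nuclear norm (sum of singular values) and ‖A‖_F the Frobenius norm. -/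
open Matrix

/-- The nuclear norm (sum of singular values) of a real matrix, where the singular values are
the square roots of the eigenvalues of `Aᵀ A`. -/
noncomputable def nuclearNorm {m n : Type*} [Fintype m] [Fintype n] [DecidableEq n]
    (A : Matrix m n ℝ) : ℝ :=
  ∑ i, Real.sqrt ((Matrix.isHermitian_conjTranspose_mul_self A).eigenvalues i)

/-- The squared Frobenius norm of a real matrix. -/
def frobSq {m n : Type*} [Fintype m] [Fintype n] (A : Matrix m n ℝ) : ℝ :=
  ∑ i, ∑ j, A i j ^ 2

section aux

open Polynomial Finset

variable {n : Type*} [Fintype n] [DecidableEq n]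

lemma aux_charpoly_conj_unitary (U M : Matrix n n ℝ) (hU : U ∈ Matrix.unitaryGroup n ℝ) :
    (U * M * star U).charpoly = M.charpoly := by
  have hUU : U * star U = 1 := (Matrix.mem_unitaryGroup_iff).mp hU
  have hUUc : (U.map C) * ((star U).map C) = (1 : Matrix n n ℝ[X]) := by
    rw [← Matrix.map_mul, hUU]; ext i j; simp [Matrix.one_apply, apply_ite C]
  have key : charmatrix (U * M * star U) = U.map C * charmatrix M * ((star U).map C) := by
    unfold charmatrix
    have hcomm : Commute (Matrix.scalar n (X : ℝ[X])) (U.map C) :=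
      (Matrix.scalar_commute _ (fun r' => Commute.all _ _) _)
    rw [mul_sub, sub_mul]
    congr 1
    · rw [← hcomm.eq, mul_assoc, hUUc, mul_one]
    · simp [RingHom.mapMatrix_apply, ← Matrix.map_mul, Matrix.mul_assoc]
  have h2 : (U.map C).det * ((star U).map C).det = 1 := by rw [← det_mul, hUUc, det_one]
  unfold Matrix.charpoly
  rw [key, det_mul, det_mul, mul_right_comm, h2, one_mul]

lemma aux_charpoly_diag (d : n → ℝ) :
    (Matrix.diagonal d).charpoly = ∏ i, (X - C (d i)) := by
  have h : charmatrix (Matrix.diagonal d) = Matrix.diagonal fun i => X - C (d i) := by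
    ext i j
    by_cases h : i = j
    · subst h; simp
    · simp [h, Matrix.diagonal_apply_ne _ h]
  rw [Matrix.charpoly, h, Matrix.det_diagonal]

lemma aux_eig_multiset (B : Matrix n n ℝ) (hB : B.IsHermitian) (U : Matrix n n ℝ)
    (hU : U ∈ Matrix.unitaryGroup n ℝ) (d : n → ℝ)
    (h : B = U * Matrix.diagonal d * star U) :
    Finset.univ.val.map hB.eigenvalues = Finset.univ.val.map d := by
  have e : ∀ f : n → ℝ, (∏ i, (X - C (f i)))
      = ((Finset.univ.val.map f).map (fun a => X - C a)).prod := by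
    intro f; rw [Multiset.map_map]; rfl
  have h1 : B.charpoly = ∏ i, (X - C (d i)) := by
    rw [h, aux_charpoly_conj_unitary _ _ hU, aux_charpoly_diag]
  have h2 : B.charpoly = ∏ i, (X - C (hB.eigenvalues i)) := by
    conv_lhs => rw [hB.spectral_theorem]
    rw [Unitary.conjStarAlgAut_apply]
    rw [aux_charpoly_conj_unitary _ _ (hB.eigenvectorUnitary).2, aux_charpoly_diag]
    simp [Function.comp]
  have h3 : ((Finset.univ.val.map hB.eigenvalues).map (fun a => X - C a)).prod
      = ((Finset.univ.val.map d).map (fun a => X - C a)).prod := by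
    rw [← e, ← e, ← h2, ← h1]
  have h4 := congrArg Polynomial.roots h3
  rwa [roots_multiset_prod_X_sub_C, roots_multiset_prod_X_sub_C] at h4

lemma aux_sum_sq_le_sq_sum {ι : Type*} (s : Finset ι) (f : ι → ℝ) (h : ∀ i ∈ s, 0 ≤ f i) :
    ∑ i ∈ s, f i ^ 2 ≤ (∑ i ∈ s, f i) ^ 2 := by
  have hS : ∀ i ∈ s, f i ≤ ∑ j ∈ s, f j := fun i hi => Finset.single_le_sum h hi
  calc ∑ i ∈ s, f i ^ 2 = ∑ i ∈ s, f i * f i := by simp [sq]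
    _ ≤ ∑ i ∈ s, f i * (∑ j ∈ s, f j) :=
        Finset.sum_le_sum fun i hi => mul_le_mul_of_nonneg_left (hS i hi) (h i hi)
    _ = (∑ i ∈ s, f i) ^ 2 := by rw [← Finset.sum_mul, sq]

end aux

/-- For real symmetric positive semidefinite `M × M` matrices `K_X ≠ K_Y`
with equal traces, the participation ratio `R(K_X − K_Y) = ‖K_X − K_Y‖_*²/‖K_X − K_Y‖_F²`
is at least `2`. -/
theorem participation_ratio_traceless_difference_ge_two
    {M : ℕ} (KX KY : Matrix (Fin M) (Fin M) ℝ)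
    (hX : KX.PosSemidef) (hY : KY.PosSemidef)
    (htr : KX.trace = KY.trace) (hne : KX ≠ KY) :
    2 ≤ nuclearNorm (KX - KY) ^ 2 / frobSq (KX - KY) := by
  classical
  set A : Matrix (Fin M) (Fin M) ℝ := KX - KY with hAdef
  have hA : A.IsHermitian := hX.1.sub hY.1
  set μ : Fin M → ℝ := hA.eigenvalues with hμ
  set U : Matrix (Fin M) (Fin M) ℝ := (hA.eigenvectorUnitary : Matrix (Fin M) (Fin M) ℝ)
    with hUdef
  have hU : U ∈ Matrix.unitaryGroup (Fin M) ℝ := hA.eigenvectorUnitary.2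
  have hU' : star U * U = 1 := (Matrix.mem_unitaryGroup_iff').mp hU
  have hdiag : Matrix.diagonal (RCLike.ofReal ∘ μ) = Matrix.diagonal μ := by
    congr 1
  have hspec : A = U * Matrix.diagonal μ * star U := by
    conv_lhs => rw [hA.spectral_theorem]
    rw [Unitary.conjStarAlgAut_apply]
    rw [hdiag]
  have hAt : Aᵀ = A := by
    rw [← Matrix.conjTranspose_eq_transpose_of_trivial]; exact hA
  have hAtA : Aᵀ * A = U * Matrix.diagonal (fun i => μ i ^ 2) * star U := by
    rw [hAt]
    conv_lhs => rw [hspec]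
    simp only [Matrix.mul_assoc]
    rw [← Matrix.mul_assoc (star U) U, hU', Matrix.one_mul,
      ← Matrix.mul_assoc (Matrix.diagonal μ), Matrix.diagonal_mul_diagonal]
    rw [show (fun i => μ i * μ i) = (fun i => μ i ^ 2) from funext fun i => (sq (μ i)).symm]
  have hmul : Finset.univ.val.map ((Matrix.isHermitian_conjTranspose_mul_self A).eigenvalues)
      = Finset.univ.val.map (fun i => μ i ^ 2) :=
    aux_eig_multiset _ _ U hU _ hAtA
  -- nuclear norm
  have hnuc : nuclearNorm A = ∑ i, |μ i| := by
    unfold nuclearNorm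
    have e1 : ∑ i, Real.sqrt ((Matrix.isHermitian_conjTranspose_mul_self A).eigenvalues i)
        = ((Finset.univ.val.map ((Matrix.isHermitian_conjTranspose_mul_self A).eigenvalues)).map
            Real.sqrt).sum := by
      rw [Multiset.map_map]; rfl
    rw [e1, hmul, Multiset.map_map]
    have e2 : ∑ i, |μ i| = (Finset.univ.val.map (fun i => |μ i|)).sum := rfl
    rw [e2]
    congr 1
    apply Multiset.map_congr rfl
    intro i _
    simp [Real.sqrt_sq_eq_abs]
  -- trace zero
  have htrA : A.trace = 0 := by
    rw [hAdef, Matrix.trace_sub, htr, sub_self]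
  have htr0 : ∑ i, μ i = 0 := by
    have : A.trace = ∑ i, μ i := by
      conv_lhs => rw [hspec]
      rw [Matrix.trace_mul_cycle, hU', Matrix.one_mul, Matrix.trace_diagonal]
    rw [← this, htrA]
  -- Frobenius
  have hfrob : frobSq A = ∑ i, μ i ^ 2 := by
    have h1 : frobSq A = (Aᵀ * A).trace := by
      unfold frobSq
      rw [Matrix.trace]
      simp only [Matrix.diag_apply, Matrix.mul_apply, Matrix.transpose_apply]
      rw [Finset.sum_comm]
      simp [sq]
    rw [h1, hAtA, Matrix.trace_mul_cycle, hU', Matrix.one_mul, Matrix.trace_diagonal]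
  have hAne : A ≠ 0 := sub_ne_zero.mpr hne
  have hij : ∃ i j, A i j ≠ 0 := by
    by_contra hc
    push_neg at hc
    exact hAne (by ext i j; simp [hc i j])
  obtain ⟨i0, j0, hij0⟩ := hij
  have hF : 0 < frobSq A := by
    unfold frobSq
    apply Finset.sum_pos' (fun i _ => Finset.sum_nonneg fun j _ => sq_nonneg _)
    refine ⟨i0, Finset.mem_univ _, ?_⟩
    apply Finset.sum_pos' (fun j _ => sq_nonneg _)
    exact ⟨j0, Finset.mem_univ _, by positivity⟩
  rw [le_div_iff₀ hF, hnuc, hfrob]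
  -- final arithmetic
  set P : ℝ := ∑ i ∈ Finset.univ.filter (fun i => 0 ≤ μ i), μ i with hP
  set N : ℝ := ∑ i ∈ Finset.univ.filter (fun i => ¬ 0 ≤ μ i), (-μ i) with hN
  have hPN : ∑ i, |μ i| = P + N := by
    rw [← Finset.sum_filter_add_sum_filter_not Finset.univ (fun i => 0 ≤ μ i)
      (fun i => |μ i|)]
    congr 1
    · exact Finset.sum_congr rfl fun i hi => abs_of_nonneg (Finset.mem_filter.mp hi).2
    · exact Finset.sum_congr rfl fun i hi =>
        abs_of_neg (lt_of_not_ge (Finset.mem_filter.mp hi).2)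
  have hPeqN : P = N := by
    have h0 := Finset.sum_filter_add_sum_filter_not Finset.univ (fun i => 0 ≤ μ i) μ
    rw [htr0] at h0
    have hNeg : ∑ i ∈ Finset.univ.filter (fun i => ¬ 0 ≤ μ i), μ i = -N := by
      rw [hN, ← Finset.sum_neg_distrib]
      simp
    rw [hNeg] at h0
    linarith
  have hFsplit : ∑ i, μ i ^ 2
      = (∑ i ∈ Finset.univ.filter (fun i => 0 ≤ μ i), μ i ^ 2)
        + ∑ i ∈ Finset.univ.filter (fun i => ¬ 0 ≤ μ i), μ i ^ 2 :=
    (Finset.sum_filter_add_sum_filter_not Finset.univ _ _).symm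
  have h1 : ∑ i ∈ Finset.univ.filter (fun i => 0 ≤ μ i), μ i ^ 2 ≤ P ^ 2 :=
    aux_sum_sq_le_sq_sum _ _ fun i hi => (Finset.mem_filter.mp hi).2
  have h2 : ∑ i ∈ Finset.univ.filter (fun i => ¬ 0 ≤ μ i), μ i ^ 2 ≤ N ^ 2 := by
    have h2' := aux_sum_sq_le_sq_sum (Finset.univ.filter (fun i => ¬ 0 ≤ μ i)) (fun i => -μ i)
      (fun i hi => by
        have hlt := lt_of_not_ge (Finset.mem_filter.mp hi).2
        show (0 : ℝ) ≤ -μ i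
        linarith)
    rw [hN]
    simpa only [neg_sq] using h2'
  rw [hPN, hPeqN]
  rw [hPeqN] at h1
  have hsum : ∑ i, μ i ^ 2 ≤ 2 * N ^ 2 := by rw [hFsplit]; linarith
  have hexp : (N + N) ^ 2 = 4 * N ^ 2 := by ring
  linarith
end
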